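/- (Bound (34b).) Let β > 0, ε > 0, L > 0, T_Δ a positive natural number, and ω_Q ≥ 0. Let Q_n, Q̂_n, Q_b, Q̂_b be real numbers with |Q_n − Q̂_n| ≤ T_Δ·ω_Q and |Q_b − Q̂_b| ≤ T_Δ·ω_Q. Define u(c) := min(max(ε·c/(2·β), 0), L) and G(u, c) := (β/ε)·u² − c·u. Then |G(u(Q̂_n − Q̂_b), Q_n − Q_b) − G(u(Q_n − Q_b), Q_n − Q_b)| ≤ (2·ε/β)·(T_Δ·ω_Q)². -/

import Mathlib

/-- The quadratic queue-price routing objective `G(u, c) = (β/ε)·u² − c·u`. -/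
noncomputable def qpObjective (β ε u c : ℝ) : ℝ := (β / ε) * u ^ 2 - c * u

/-- The clamped minimizer `u(c) = clamp(ε·c/(2·β); [0, L])`. -/
noncomputable def qpMinimizer (β ε L c : ℝ) : ℝ := min (max (ε * c / (2 * β)) 0) L

private lemma clamp_sq_diff (L m m' : ℝ) (hL : 0 < L) :
    (min (max m' 0) L - m) ^ 2 - (min (max m 0) L - m) ^ 2 ≤ 2 * (m' - m) ^ 2 := by
  have f : ∀ x : ℝ, x ≤ 0 → min (max x 0) L = 0 := fun x hx => by
    rw [max_eq_right hx, min_eq_left hL.le]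
  have g : ∀ x : ℝ, 0 ≤ x → x ≤ L → min (max x 0) L = x := fun x h h' => by
    rw [max_eq_left h, min_eq_left h']
  have k : ∀ x : ℝ, L ≤ x → min (max x 0) L = L := fun x h => by
    rw [max_eq_left (hL.le.trans h), min_eq_right h]
  rcases le_total m 0 with h1 | h1
  · rw [f m h1]
    rcases le_total m' 0 with h2 | h2
    · rw [f m' h2]; nlinarith
    · rcases le_total m' L with h4 | h4
      · rw [g m' h2 h4]; nlinarith
      · rw [k m' h4]; nlinarith
  · rcases le_total m L with h3 | h3
    · rw [g m h1 h3]
      rcases le_total m' 0 with h2 | h2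
      · rw [f m' h2]; nlinarith
      · rcases le_total m' L with h4 | h4
        · rw [g m' h2 h4]; nlinarith
        · rw [k m' h4]; nlinarith
    · rw [k m h3]
      rcases le_total m' 0 with h2 | h2
      · rw [f m' h2]; nlinarith
      · rcases le_total m' L with h4 | h4
        · rw [g m' h2 h4]; nlinarith
        · rw [k m' h4]; nlinarith

private lemma clamp_proj (L m v : ℝ) (hL : 0 < L) (hv0 : 0 ≤ v) (hvL : v ≤ L) :
    |min (max m 0) L - m| ≤ |v - m| := by
  rcases le_total m 0 with h | h
  · rw [max_eq_right h, min_eq_left hL.le]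
    rw [abs_of_nonneg (by linarith), abs_of_nonneg (by linarith)]
    linarith
  · rcases le_total m L with h2 | h2
    · rw [max_eq_left h, min_eq_left h2, sub_self, abs_zero]
      exact abs_nonneg _
    · rw [max_eq_left h, min_eq_right h2]
      rw [abs_of_nonpos (by linarith), abs_of_nonpos (by linarith)]
      linarith

/-- Bound (34b): optimality loss of the routing objective `f₂` caused by
using the window-start backlog approximations. -/
theorem routing_objective_loss_bound_u
    (β ε L : ℝ) (hβ : 0 < β) (hε : 0 < ε) (hL : 0 < L)
    (TΔ : ℕ) (hTΔ : 0 < TΔ)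
    (ωQ : ℝ) (hωQ : 0 ≤ ωQ)
    (Qn Qnhat Qb Qbhat : ℝ)
    (hQn : |Qn - Qnhat| ≤ (TΔ : ℝ) * ωQ)
    (hQb : |Qb - Qbhat| ≤ (TΔ : ℝ) * ωQ) :
    |qpObjective β ε (qpMinimizer β ε L (Qnhat - Qbhat)) (Qn - Qb)
        - qpObjective β ε (qpMinimizer β ε L (Qn - Qb)) (Qn - Qb)|
      ≤ (2 * ε / β) * ((TΔ : ℝ) * ωQ) ^ 2 := by
  set c : ℝ := Qn - Qb with hc
  set c' : ℝ := Qnhat - Qbhat with hc'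
  set m : ℝ := ε * c / (2 * β) with hm
  set m' : ℝ := ε * c' / (2 * β) with hm'
  set u : ℝ := min (max m 0) L with hu
  set u' : ℝ := min (max m' 0) L with hu'
  have hβ' : β ≠ 0 := hβ.ne'
  have hε' : ε ≠ 0 := hε.ne'
  have ha : (0:ℝ) < β / ε := div_pos hβ hε
  -- rewrite the difference as a completed square
  have hdiff : qpObjective β ε u' c - qpObjective β ε u c
      = (β / ε) * ((u' - m) ^ 2 - (u - m) ^ 2) := by
    simp only [qpObjective, hm]
    field_simp
    ring
  -- projection property: |u - m| ≤ |u' - m| since u' ∈ [0, L]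
  have hproj : |u - m| ≤ |u' - m| :=
    clamp_proj L m u' hL (le_min (le_max_right _ _) hL.le) (min_le_right _ _)
  have hnonneg : 0 ≤ (u' - m) ^ 2 - (u - m) ^ 2 := by
    nlinarith [abs_nonneg (u - m), abs_nonneg (u' - m), sq_abs (u - m), sq_abs (u' - m)]
  have hupper : (u' - m) ^ 2 - (u - m) ^ 2 ≤ 2 * (m' - m) ^ 2 :=
    clamp_sq_diff L m m' hL
  -- bound on |m' - m|
  have hcc : |c' - c| ≤ 2 * ((TΔ : ℝ) * ωQ) := by
    have h0 : c' - c = -(Qn - Qnhat) + (Qb - Qbhat) := by rw [hc, hc']; ring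
    rw [h0]
    calc |(-(Qn - Qnhat)) + (Qb - Qbhat)| ≤ |(-(Qn - Qnhat))| + |Qb - Qbhat| := abs_add_le _ _
      _ ≤ (TΔ : ℝ) * ωQ + (TΔ : ℝ) * ωQ := by rw [abs_neg]; exact add_le_add hQn hQb
      _ = 2 * ((TΔ : ℝ) * ωQ) := by ring
  have hmm : (m' - m) ^ 2 ≤ (ε / (2 * β)) ^ 2 * (2 * ((TΔ : ℝ) * ωQ)) ^ 2 := by
    have hm2 : m' - m = (ε / (2 * β)) * (c' - c) := by rw [hm, hm']; ring
    rw [hm2, mul_pow]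
    have hsq : (c' - c) ^ 2 ≤ (2 * ((TΔ : ℝ) * ωQ)) ^ 2 := by
      nlinarith [abs_le.mp hcc]
    exact mul_le_mul_of_nonneg_left hsq (sq_nonneg _)
  -- put it together
  rw [show qpMinimizer β ε L c' = u' from rfl, show qpMinimizer β ε L c = u from rfl,
    hdiff, abs_of_nonneg (by positivity)]
  calc (β / ε) * ((u' - m) ^ 2 - (u - m) ^ 2)
      ≤ (β / ε) * (2 * ((ε / (2 * β)) ^ 2 * (2 * ((TΔ : ℝ) * ωQ)) ^ 2)) := by
        have := hupper.trans (by linarith : 2 * (m' - m) ^ 2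
          ≤ 2 * ((ε / (2 * β)) ^ 2 * (2 * ((TΔ : ℝ) * ωQ)) ^ 2))
        exact mul_le_mul_of_nonneg_left this ha.le
    _ = (2 * ε / β) * ((TΔ : ℝ) * ωQ) ^ 2 := by field_simp
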